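/- (Awerbuch–Peleg sparse covers, existence version.) Let G be a simple graph on a finite vertex set V, let 𝒞 be a finite cover of G (a finite family of clusters, i.e., vertex subsets each inducing a connected subgraph, whose union is V), and let κ ≥ 1 be an integer. Then there exists a cover 𝒞′ of G such that: (i) for every cluster B ∈ 𝒞 there is a cluster B′ ∈ 𝒞′ with B ⊆ B′; (ii) max_{B′ ∈ 𝒞′} Diam(B′) ≤ 4κ · max_{B ∈ 𝒞} Diam(B); and (iii) every vertex of V belongs to at most 2κ·|𝒞|^{1/κ} clusters of 𝒞′. -/

import Mathlib

open Finset

section AP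
variable {V : Type*} [Fintype V] [DecidableEq V] (G : SimpleGraph V) (𝒞 : Finset (Finset V))

/-- hypothesis: all clusters of 𝒞 have diameter ≤ D -/
def APHyp (D : ℕ) : Prop :=
  ∀ B ∈ 𝒞, ∀ u v : V, ∀ (hu : u ∈ B) (hv : v ∈ B),
    (G.induce (B : Set V)).dist ⟨u, Finset.mem_coe.mpr hu⟩ ⟨v, Finset.mem_coe.mpr hv⟩ ≤ D

/-- Y has diameter ≤ c * D whenever all clusters of 𝒞 have diameter ≤ D -/
def APBdd (Y : Finset V) (c : ℕ) : Prop :=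
  ∀ D : ℕ, APHyp G 𝒞 D → ∀ u v : V, ∀ (hu : u ∈ Y) (hv : v ∈ Y),
    (G.induce (Y : Set V)).dist ⟨u, Finset.mem_coe.mpr hu⟩ ⟨v, Finset.mem_coe.mpr hv⟩ ≤ c * D

lemma ap_dist_mono {s t : Set V} (h : s ⊆ t) (u v : s)
    (hr : (G.induce s).Reachable u v) :
    (G.induce t).dist ⟨u.1, h u.2⟩ ⟨v.1, h v.2⟩ ≤ (G.induce s).dist u v := by
  obtain ⟨p, hp⟩ := hr.exists_walk_length_eq_dist
  let F : G.induce s →g G.induce t := ⟨fun x => ⟨x.1, h x.2⟩, fun {a b} hab => hab⟩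
  calc (G.induce t).dist ⟨u.1, h u.2⟩ ⟨v.1, h v.2⟩ ≤ (p.map F).length := SimpleGraph.dist_le _
    _ = p.length := SimpleGraph.Walk.length_map _ _
    _ = _ := hp

lemma ap_dist_le_of_subset (A Y : Finset V) (hAY : A ⊆ Y)
    (hA : (G.induce (A : Set V)).Connected) (u v : V) (hu : u ∈ A) (hv : v ∈ A)
    (d : ℕ)
    (hd : (G.induce (A : Set V)).dist ⟨u, Finset.mem_coe.mpr hu⟩ ⟨v, Finset.mem_coe.mpr hv⟩ ≤ d) :
    (G.induce (Y : Set V)).dist ⟨u, Finset.mem_coe.mpr (hAY hu)⟩ ⟨v, Finset.mem_coe.mpr (hAY hv)⟩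
      ≤ d := by
  have hsub : (A : Set V) ⊆ (Y : Set V) := Finset.coe_subset.mpr hAY
  exact le_trans (ap_dist_mono G hsub ⟨u, Finset.mem_coe.mpr hu⟩ ⟨v, Finset.mem_coe.mpr hv⟩ (hA.preconnected _ _)) hd

lemma ap_conn_union (K : Finset V) (hK : (G.induce (K : Set V)).Connected)
    (Z : Finset (Finset V)) (hZconn : ∀ B ∈ Z, (G.induce (B : Set V)).Connected)
    (hZmeet : ∀ B ∈ Z, (B ∩ K).Nonempty) :
    (G.induce ((K ∪ Z.sup id : Finset V) : Set V)).Connected := by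
  induction Z using Finset.induction with
  | empty =>
    have : (K ∪ (∅ : Finset (Finset V)).sup id : Finset V) = K := by simp
    rw [this]; exact hK
  | @insert S Z hS ih =>
    have h1 : (K ∪ (insert S Z).sup id : Finset V) = (K ∪ Z.sup id) ∪ S := by
      rw [Finset.sup_insert]
      change K ∪ (S ∪ Z.sup id) = _
      rw [Finset.union_comm S, Finset.union_assoc]
    rw [h1, Finset.coe_union]
    apply SimpleGraph.induce_union_connected
    · exact (ih (fun B hB => hZconn B (Finset.mem_insert_of_mem hB))
        (fun B hB => hZmeet B (Finset.mem_insert_of_mem hB))).preconnected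
    · exact (hZconn S (Finset.mem_insert_self _ _)).preconnected
    · obtain ⟨x, hx⟩ := hZmeet S (Finset.mem_insert_self _ _)
      rw [Finset.mem_inter] at hx
      exact ⟨x, Set.mem_inter (by simp [hx.2]) (by simp [hx.1])⟩

lemma ap_bdd_mono (Y : Finset V) (c c' : ℕ) (hcc : c ≤ c') (h : APBdd G 𝒞 Y c) :
    APBdd G 𝒞 Y c' := fun D hD u v hu hv =>
  le_trans (h D hD u v hu hv) (Nat.mul_le_mul_right D hcc)

lemma ap_mem_sup {𝒴 : Finset (Finset V)} {x : V} (h : x ∈ 𝒴.sup id) :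
    ∃ B ∈ 𝒴, x ∈ B := by
  simpa using (Finset.mem_sup (f := (id : Finset V → Finset V))).mp h

lemma ap_nonempty (hconn : ∀ B ∈ 𝒞, (G.induce (B : Set V)).Connected)
    (B : Finset V) (hB : B ∈ 𝒞) : B.Nonempty := by
  obtain ⟨⟨x, hx⟩⟩ := (hconn B hB).nonempty
  exact ⟨x, Finset.mem_coe.mp hx⟩

lemma ap_bdd_step (hconn : ∀ B ∈ 𝒞, (G.induce (B : Set V)).Connected)
    (𝒴 Z : Finset (Finset V)) (hZC : ∀ B ∈ Z, B ∈ 𝒞) (h𝒴Z : 𝒴 ⊆ Z)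
    (hmeet : ∀ B ∈ Z, (B ∩ 𝒴.sup id).Nonempty)
    (hKconn : (G.induce ((𝒴.sup id : Finset V) : Set V)).Connected)
    (hZconn : (G.induce ((Z.sup id : Finset V) : Set V)).Connected)
    (c : ℕ) (hB : APBdd G 𝒞 (𝒴.sup id) c) :
    APBdd G 𝒞 (Z.sup id) (c + 2) := by
  intro D hD u v hu hv
  obtain ⟨Bu, hBuZ, hBu⟩ := ap_mem_sup hu
  obtain ⟨Bv, hBvZ, hBv⟩ := ap_mem_sup hv
  obtain ⟨wu, hwu⟩ := hmeet Bu hBuZ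
  obtain ⟨wv, hwv⟩ := hmeet Bv hBvZ
  rw [Finset.mem_inter] at hwu hwv
  have hBuY : Bu ⊆ Z.sup id := Finset.le_sup (f := id) hBuZ
  have hBvY : Bv ⊆ Z.sup id := Finset.le_sup (f := id) hBvZ
  have hKY : 𝒴.sup id ⊆ Z.sup id := Finset.sup_mono h𝒴Z
  have hwuZ : wu ∈ Z.sup id := hKY hwu.2
  have hwvZ : wv ∈ Z.sup id := hKY hwv.2
  have d1 : (G.induce ((Z.sup id : Finset V) : Set V)).dist
      ⟨u, Finset.mem_coe.mpr hu⟩ ⟨wu, Finset.mem_coe.mpr hwuZ⟩ ≤ D :=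
    ap_dist_le_of_subset G Bu (Z.sup id) hBuY (hconn Bu (hZC Bu hBuZ)) u wu hBu hwu.1 D
      (hD Bu (hZC Bu hBuZ) u wu hBu hwu.1)
  have d3 : (G.induce ((Z.sup id : Finset V) : Set V)).dist
      ⟨wv, Finset.mem_coe.mpr hwvZ⟩ ⟨v, Finset.mem_coe.mpr hv⟩ ≤ D :=
    ap_dist_le_of_subset G Bv (Z.sup id) hBvY (hconn Bv (hZC Bv hBvZ)) wv v hwv.1 hBv D
      (hD Bv (hZC Bv hBvZ) wv v hwv.1 hBv)
  have d2 : (G.induce ((Z.sup id : Finset V) : Set V)).dist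
      ⟨wu, Finset.mem_coe.mpr hwuZ⟩ ⟨wv, Finset.mem_coe.mpr hwvZ⟩ ≤ c * D :=
    ap_dist_le_of_subset G (𝒴.sup id) (Z.sup id) hKY hKconn wu wv hwu.2 hwv.2 (c * D)
      (hB D hD wu wv hwu.2 hwv.2)
  have t1 := hZconn.dist_triangle (u := ⟨u, Finset.mem_coe.mpr hu⟩)
    (v := ⟨wu, Finset.mem_coe.mpr hwuZ⟩) (w := ⟨v, Finset.mem_coe.mpr hv⟩)
  have t2 := hZconn.dist_triangle (u := ⟨wu, Finset.mem_coe.mpr hwuZ⟩)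
    (v := ⟨wv, Finset.mem_coe.mpr hwvZ⟩) (w := ⟨v, Finset.mem_coe.mpr hv⟩)
  have e : (c + 2) * D = D + (c * D + D) := by ring
  rw [e]
  exact le_trans t1 (add_le_add d1 (le_trans t2 (add_le_add d2 d3)))

lemma ap_merge (hconn : ∀ B ∈ 𝒞, (G.induce (B : Set V)).Connected)
    (κ : ℕ) (σ : ℝ) (hσ : 1 ≤ σ) (U : Finset (Finset V))
    (hUC : ∀ B ∈ U, B ∈ 𝒞) (hUcard : (U.card : ℝ) ≤ σ ^ κ)
    (S : Finset V) (hS : S ∈ U) :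
    ∃ 𝒴 : Finset (Finset V), 𝒴 ⊆ U ∧ S ∈ 𝒴 ∧
      (G.induce ((𝒴.sup id : Finset V) : Set V)).Connected ∧
      APBdd G 𝒞 (𝒴.sup id) (2 * κ + 1) ∧
      ((U.filter (fun B => (B ∩ 𝒴.sup id).Nonempty)).card : ℝ) ≤ σ * 𝒴.card := by
  suffices key : ∀ t j (𝒴 : Finset (Finset V)), j + t = κ → 𝒴 ⊆ U → S ∈ 𝒴 →
      (G.induce ((𝒴.sup id : Finset V) : Set V)).Connected →
      APBdd G 𝒞 (𝒴.sup id) (2 * j + 1) → σ ^ j ≤ (𝒴.card : ℝ) →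
      ∃ 𝒴' : Finset (Finset V), 𝒴' ⊆ U ∧ S ∈ 𝒴' ∧
        (G.induce ((𝒴'.sup id : Finset V) : Set V)).Connected ∧
        APBdd G 𝒞 (𝒴'.sup id) (2 * κ + 1) ∧
        ((U.filter (fun B => (B ∩ 𝒴'.sup id).Nonempty)).card : ℝ) ≤ σ * 𝒴'.card by
    have hsup : ({S} : Finset (Finset V)).sup id = S := Finset.sup_singleton
    refine key κ 0 {S} (by omega) (by simpa using hS) (Finset.mem_singleton_self S) ?_ ?_ ?_
    · rw [hsup]; exact hconn S (hUC S hS)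
    · rw [hsup]
      intro D hD u v hu hv
      simpa using hD S (hUC S hS) u v hu hv
    · simp
  intro t
  induction t with
  | zero =>
    intro j 𝒴 hjt h𝒴U hS𝒴 hcon hbdd hcard
    have hj : j = κ := by omega
    subst hj
    by_cases hc : ((U.filter (fun B => (B ∩ 𝒴.sup id).Nonempty)).card : ℝ) ≤ σ * 𝒴.card
    · exact ⟨𝒴, h𝒴U, hS𝒴, hcon, hbdd, hc⟩
    · exfalso
      push_neg at hc
      have h1 : ((U.filter (fun B => (B ∩ 𝒴.sup id).Nonempty)).card : ℝ) ≤ (U.card : ℝ) :=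
        Nat.cast_le.mpr (Finset.card_filter_le _ _)
      have h2 : σ ^ j ≤ σ * σ ^ j := le_mul_of_one_le_left (by positivity) hσ
      have h3 : σ * σ ^ j ≤ σ * 𝒴.card :=
        mul_le_mul_of_nonneg_left hcard (by linarith)
      linarith
  | succ t ih =>
    intro j 𝒴 hjt h𝒴U hS𝒴 hcon hbdd hcard
    by_cases hc : ((U.filter (fun B => (B ∩ 𝒴.sup id).Nonempty)).card : ℝ) ≤ σ * 𝒴.card
    · exact ⟨𝒴, h𝒴U, hS𝒴, hcon, ap_bdd_mono G 𝒞 _ _ _ (by omega) hbdd, hc⟩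
    · push_neg at hc
      set Z := U.filter (fun B => (B ∩ 𝒴.sup id).Nonempty) with hZdef
      have h𝒴Z : 𝒴 ⊆ Z := by
        intro B hB
        refine Finset.mem_filter.mpr ⟨h𝒴U hB, ?_⟩
        obtain ⟨x, hx⟩ := ap_nonempty G 𝒞 hconn B (hUC B (h𝒴U hB))
        exact ⟨x, Finset.mem_inter.mpr ⟨hx, (Finset.le_sup (f := id) hB) hx⟩⟩
      have hZU : Z ⊆ U := Finset.filter_subset _ _
      have hconZ : (G.induce ((Z.sup id : Finset V) : Set V)).Connected := by
        have h1 : (𝒴.sup id ∪ Z.sup id : Finset V) = Z.sup id :=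
          Finset.union_eq_right.mpr (Finset.sup_mono h𝒴Z)
        have h2 := ap_conn_union G (𝒴.sup id) hcon Z
          (fun B hB => hconn B (hUC B (hZU hB)))
          (fun B hB => (Finset.mem_filter.mp hB).2)
        rwa [h1] at h2
      refine ih (j + 1) Z (by omega) hZU (h𝒴Z hS𝒴) hconZ ?_ ?_
      · have e : 2 * (j + 1) + 1 = (2 * j + 1) + 2 := by ring
        rw [e]
        exact ap_bdd_step G 𝒞 hconn 𝒴 Z (fun B hB => hUC B (hZU hB)) h𝒴Z
          (fun B hB => (Finset.mem_filter.mp hB).2) hcon hconZ _ hbdd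
      · have h3 : σ * σ ^ j ≤ σ * 𝒴.card :=
          mul_le_mul_of_nonneg_left hcard (by linarith)
        rw [pow_succ]
        calc σ ^ j * σ = σ * σ ^ j := by ring
          _ ≤ σ * 𝒴.card := h3
          _ ≤ Z.card := le_of_lt hc


lemma ap_phase (hconn : ∀ B ∈ 𝒞, (G.induce (B : Set V)).Connected)
    (κ : ℕ) (σ : ℝ) (hσ : 1 ≤ σ) :
    ∀ n (U : Finset (Finset V)), U.card = n → (∀ B ∈ U, B ∈ 𝒞) →
      ((U.card : ℝ) ≤ σ ^ κ) →
      ∃ 𝒯 K : Finset (Finset V),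
        K ⊆ U ∧
        (∀ Y ∈ 𝒯, (G.induce ((Y : Finset V) : Set V)).Connected ∧
          APBdd G 𝒞 Y (2 * κ + 1) ∧ Y ⊆ U.sup id) ∧
        (∀ B ∈ K, ∃ Y ∈ 𝒯, B ⊆ Y) ∧
        (∀ v : V, (𝒯.filter (fun Y => v ∈ Y)).card ≤ 1) ∧
        ((U.card : ℝ) ≤ σ * K.card) := by
  intro n
  induction n using Nat.strong_induction_on with
  | _ n ih =>
    intro U hUn hUC hUcard
    rcases Finset.eq_empty_or_nonempty U with rfl | ⟨S, hS⟩
    · exact ⟨∅, ∅, Finset.Subset.refl _, by simp, by simp, by simp, by simp⟩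
    obtain ⟨𝒴, h𝒴U, hS𝒴, hconY, hbddY, hZcard⟩ :=
      ap_merge G 𝒞 hconn κ σ hσ U hUC hUcard S hS
    set Z := U.filter (fun B => (B ∩ 𝒴.sup id).Nonempty) with hZdef
    have h𝒴Z : 𝒴 ⊆ Z := by
      intro B hB
      refine Finset.mem_filter.mpr ⟨h𝒴U hB, ?_⟩
      obtain ⟨x, hx⟩ := ap_nonempty G 𝒞 hconn B (hUC B (h𝒴U hB))
      exact ⟨x, Finset.mem_inter.mpr ⟨hx, (Finset.le_sup (f := id) hB) hx⟩⟩
    have hZU : Z ⊆ U := Finset.filter_subset _ _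
    have hSZ : S ∈ Z := h𝒴Z hS𝒴
    have hUZlt : (U \ Z).card < n := by
      rw [← hUn]
      exact Finset.card_lt_card (Finset.ssubset_iff_of_subset Finset.sdiff_subset |>.mpr
        ⟨S, hS, by simp [hSZ]⟩)
    obtain ⟨𝒯', K', hK'U, h𝒯'props, hK'cov, h𝒯'load, hK'card⟩ :=
      ih (U \ Z).card hUZlt (U \ Z) rfl (fun B hB => hUC B (Finset.sdiff_subset hB))
        (le_trans (Nat.cast_le.mpr (Finset.card_le_card Finset.sdiff_subset)) hUcard)
    refine ⟨insert (𝒴.sup id) 𝒯', 𝒴 ∪ K', ?_, ?_, ?_, ?_, ?_⟩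
    · intro B hB
      rcases Finset.mem_union.mp hB with h | h
      · exact h𝒴U h
      · exact Finset.sdiff_subset (hK'U h)
    · intro Y hY
      rcases Finset.mem_insert.mp hY with rfl | hY'
      · exact ⟨hconY, hbddY, Finset.sup_mono h𝒴U⟩
      · obtain ⟨h1, h2, h3⟩ := h𝒯'props Y hY'
        exact ⟨h1, h2, h3.trans (Finset.sup_mono Finset.sdiff_subset)⟩
    · intro B hB
      rcases Finset.mem_union.mp hB with h | h
      · exact ⟨𝒴.sup id, Finset.mem_insert_self _ _, Finset.le_sup (f := id) h⟩
      · obtain ⟨Y, hY, hBY⟩ := hK'cov B h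
        exact ⟨Y, Finset.mem_insert_of_mem hY, hBY⟩
    · intro v
      rw [Finset.filter_insert]
      split_ifs with hv
      · have hemp : 𝒯'.filter (fun Y => v ∈ Y) = ∅ := by
          rw [Finset.filter_eq_empty_iff]
          intro Y hY hvY
          obtain ⟨-, -, h3⟩ := h𝒯'props Y hY
          obtain ⟨B, hBUZ, hvB⟩ := ap_mem_sup (h3 hvY)
          have hBnZ := (Finset.mem_sdiff.mp hBUZ).2
          rw [hZdef, Finset.mem_filter] at hBnZ
          exact hBnZ ⟨(Finset.mem_sdiff.mp hBUZ).1, v, Finset.mem_inter.mpr ⟨hvB, hv⟩⟩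
        rw [hemp]
        simp
      · exact h𝒯'load v
    · have hdisj : Disjoint 𝒴 K' := by
        rw [Finset.disjoint_left]
        intro B hB hBK'
        exact (Finset.mem_sdiff.mp (hK'U hBK')).2 (h𝒴Z hB)
      have hcardU : (U \ Z).card + Z.card = U.card :=
        Finset.card_sdiff_add_card_eq_card hZU
      have hcu : ((𝒴 ∪ K').card : ℝ) = (K'.card : ℝ) + 𝒴.card := by
        rw [Finset.card_union_of_disjoint hdisj]; push_cast; ring
      have h1 : (U.card : ℝ) = ((U \ Z).card : ℝ) + Z.card := by
        rw [← hcardU]; push_cast; ring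
      rw [h1, hcu, mul_add]
      exact add_le_add hK'card hZcard

lemma ap_pow_sub (a b : ℝ) (hb : 0 ≤ b) (hba : b ≤ a) :
    ∀ k : ℕ, a ^ (k + 1) - b ^ (k + 1) ≤ (k + 1) * (a - b) * a ^ k := by
  intro k
  induction k with
  | zero => simp
  | succ k ih =>
    have ha : 0 ≤ a := le_trans hb hba
    have hpow : b ^ (k + 1) ≤ a ^ (k + 1) := pow_le_pow_left₀ hb hba (k + 1)
    have h1 : a ^ (k + 2) - b ^ (k + 2)
        = a * (a ^ (k + 1) - b ^ (k + 1)) + (a - b) * b ^ (k + 1) := by ring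
    have h2 : a * (a ^ (k + 1) - b ^ (k + 1)) ≤ a * ((k + 1) * (a - b) * a ^ k) :=
      mul_le_mul_of_nonneg_left ih ha
    have h3 : (a - b) * b ^ (k + 1) ≤ (a - b) * a ^ (k + 1) :=
      mul_le_mul_of_nonneg_left hpow (by linarith)
    have h4 : a * ((k + 1) * (a - b) * a ^ k) = (k + 1) * (a - b) * a ^ (k + 1) := by ring
    calc a ^ (k + 2) - b ^ (k + 2)
        = a * (a ^ (k + 1) - b ^ (k + 1)) + (a - b) * b ^ (k + 1) := h1
      _ ≤ (k + 1) * (a - b) * a ^ (k + 1) + (a - b) * a ^ (k + 1) := by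
          rw [← h4]; exact add_le_add h2 h3
      _ = (↑(k + 1) + 1) * (a - b) * a ^ (k + 1) := by push_cast; ring

lemma ap_cover (hconn : ∀ B ∈ 𝒞, (G.induce (B : Set V)).Connected)
    (κ : ℕ) (hκ : 1 ≤ κ) :
    ∀ n (ℛ : Finset (Finset V)), ℛ.card = n → (∀ B ∈ ℛ, B ∈ 𝒞) →
      ∃ 𝒞' : Finset (Finset V),
        (∀ Y ∈ 𝒞', (G.induce ((Y : Finset V) : Set V)).Connected ∧
          APBdd G 𝒞 Y (2 * κ + 1)) ∧
        (∀ B ∈ ℛ, ∃ Y ∈ 𝒞', B ⊆ Y) ∧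
        (∀ v : V, ((𝒞'.filter (fun Y => v ∈ Y)).card : ℝ) ≤
          (κ : ℝ) * (n : ℝ) ^ ((1 : ℝ) / (κ : ℝ))) := by
  intro n
  induction n using Nat.strong_induction_on with
  | _ n ih =>
    intro ℛ hn hRC
    rcases Nat.eq_zero_or_pos n with rfl | hn1
    · rw [Finset.card_eq_zero] at hn
      subst hn
      refine ⟨∅, by simp, by simp, fun v => ?_⟩
      simp only [Finset.filter_empty, Finset.card_empty, Nat.cast_zero]
      positivity
    have hκ0 : (κ : ℝ) ≠ 0 := by positivity
    set σ := (n : ℝ) ^ ((1 : ℝ) / (κ : ℝ)) with hσdef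
    have hn0 : (0 : ℝ) ≤ (n : ℝ) := by positivity
    have hσκ : σ ^ κ = (n : ℝ) := by
      rw [hσdef, ← Real.rpow_natCast ((n : ℝ) ^ ((1 : ℝ) / (κ : ℝ))) κ,
        ← Real.rpow_mul hn0, one_div, inv_mul_cancel₀ hκ0, Real.rpow_one]
    have hσ1 : (1 : ℝ) ≤ σ := by
      rw [hσdef]
      calc (1 : ℝ) = (1 : ℝ) ^ ((1 : ℝ) / (κ : ℝ)) := (Real.one_rpow _).symm
        _ ≤ (n : ℝ) ^ ((1 : ℝ) / (κ : ℝ)) :=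
          Real.rpow_le_rpow (by norm_num) (by exact_mod_cast hn1) (by positivity)
    have hσ0 : (0 : ℝ) < σ := by linarith
    obtain ⟨𝒯, K, hKR, h𝒯props, hKcov, h𝒯load, hKcard⟩ :=
      ap_phase G 𝒞 hconn κ σ hσ1 n ℛ hn hRC (by rw [hn, hσκ])
    have hK1 : 1 ≤ K.card := by
      rcases Nat.eq_zero_or_pos K.card with h0 | h
      · exfalso
        rw [hn] at hKcard
        rw [h0] at hKcard
        simp at hKcard
        have : (1 : ℝ) ≤ (n : ℝ) := by exact_mod_cast hn1
        linarith
      · exact h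
    have hn'lt : (ℛ \ K).card < n := by
      rw [← hn]
      exact Finset.card_lt_card (Finset.ssubset_iff_of_subset Finset.sdiff_subset |>.mpr
        (by
          obtain ⟨B, hB⟩ := Finset.card_pos.mp hK1
          exact ⟨B, hKR hB, by simp [hB]⟩))
    obtain ⟨𝒞'', h𝒞''props, h𝒞''cov, h𝒞''load⟩ :=
      ih (ℛ \ K).card hn'lt (ℛ \ K) rfl (fun B hB => hRC B (Finset.sdiff_subset hB))
    refine ⟨𝒯 ∪ 𝒞'', ?_, ?_, ?_⟩
    · intro Y hY
      rcases Finset.mem_union.mp hY with h | h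
      · obtain ⟨h1, h2, -⟩ := h𝒯props Y h
        exact ⟨h1, h2⟩
      · exact h𝒞''props Y h
    · intro B hB
      by_cases hBK : B ∈ K
      · obtain ⟨Y, hY, hBY⟩ := hKcov B hBK
        exact ⟨Y, Finset.mem_union_left _ hY, hBY⟩
      · obtain ⟨Y, hY, hBY⟩ := h𝒞''cov B (Finset.mem_sdiff.mpr ⟨hB, hBK⟩)
        exact ⟨Y, Finset.mem_union_right _ hY, hBY⟩
    · intro v
      -- key numeric inequality
      obtain ⟨k, hk⟩ : ∃ k, κ = k + 1 := ⟨κ - 1, by omega⟩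
      set b : ℝ := σ - 1 / (κ : ℝ) with hbdef
      have hb0 : 0 ≤ b := by
        have : 1 / (κ : ℝ) ≤ 1 := by
          rw [div_le_one (by positivity)]
          exact_mod_cast hκ
        rw [hbdef]; linarith
      have hba : b ≤ σ := by
        rw [hbdef]
        have : 0 < 1 / (κ : ℝ) := by positivity
        linarith
      have hps := ap_pow_sub σ b hb0 hba k
      -- σ^κ - b^κ ≤ κ*(σ-b)*σ^(κ-1) = σ^(κ-1)
      have hps2 : σ ^ κ - σ ^ k ≤ b ^ κ := by
        have hsb : σ - b = 1 / (κ : ℝ) := by rw [hbdef]; ring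
        have h1 : ((k : ℝ) + 1) * (σ - b) * σ ^ k = σ ^ k := by
          rw [hsb, hk]; push_cast; field_simp
        rw [hk]
        have h2 := hps
        rw [h1] at h2
        linarith
      -- (ℛ \ K).card ≤ n - n/σ ≤ b^κ
      have hKn : ((ℛ \ K).card : ℝ) = (n : ℝ) - K.card := by
        rw [Finset.card_sdiff_of_subset hKR, hn]
        have : K.card ≤ n := by rw [← hn]; exact Finset.card_le_card hKR
        push_cast [Nat.cast_sub this]
        ring
      have hKge : (n : ℝ) / σ ≤ (K.card : ℝ) := by
        rw [div_le_iff₀ hσ0]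
        rw [hn] at hKcard
        calc (n : ℝ) ≤ σ * K.card := hKcard
          _ = (K.card : ℝ) * σ := by ring
      have hnσ : (n : ℝ) / σ = σ ^ k := by
        rw [← hσκ, hk, pow_succ]
        field_simp
      have hn'le : ((ℛ \ K).card : ℝ) ≤ b ^ κ := by
        rw [hKn]
        have h2 : (n : ℝ) - K.card ≤ (n : ℝ) - (n : ℝ) / σ := by linarith
        rw [hnσ] at h2
        rw [← hσκ] at h2
        linarith
      -- rpow monotonicity
      have hrp : (((ℛ \ K).card : ℕ) : ℝ) ^ ((1 : ℝ) / (κ : ℝ)) ≤ b := by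
        have h1 : (((ℛ \ K).card : ℕ) : ℝ) ^ ((1 : ℝ) / (κ : ℝ))
            ≤ (b ^ κ) ^ ((1 : ℝ) / (κ : ℝ)) :=
          Real.rpow_le_rpow (by positivity) hn'le (by positivity)
        have h2 : (b ^ κ : ℝ) ^ ((1 : ℝ) / (κ : ℝ)) = b := by
          rw [← Real.rpow_natCast b κ, ← Real.rpow_mul hb0]
          rw [mul_one_div, div_self hκ0, Real.rpow_one]
        rwa [h2] at h1
      have hκb : (κ : ℝ) * b = (κ : ℝ) * σ - 1 := by
        rw [hbdef]
        field_simp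
      have hload2 := h𝒞''load v
      have hload1 := h𝒯load v
      have hcardle : ((𝒯 ∪ 𝒞'').filter (fun Y => v ∈ Y)).card ≤
          (𝒯.filter (fun Y => v ∈ Y)).card + (𝒞''.filter (fun Y => v ∈ Y)).card := by
        rw [Finset.filter_union]
        exact Finset.card_union_le _ _
      have hc1 : (((𝒯 ∪ 𝒞'').filter (fun Y => v ∈ Y)).card : ℝ) ≤
          1 + ((𝒞''.filter (fun Y => v ∈ Y)).card : ℝ) := by
        have := le_trans hcardle (add_le_add_left hload1 _)
        exact_mod_cast this
      have hmul : (κ : ℝ) * (((ℛ \ K).card : ℕ) : ℝ) ^ ((1 : ℝ) / (κ : ℝ)) ≤ (κ : ℝ) * b :=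
        mul_le_mul_of_nonneg_left hrp (by positivity)
      calc (((𝒯 ∪ 𝒞'').filter (fun Y => v ∈ Y)).card : ℝ)
          ≤ 1 + ((𝒞''.filter (fun Y => v ∈ Y)).card : ℝ) := hc1
        _ ≤ 1 + (κ : ℝ) * (((ℛ \ K).card : ℕ) : ℝ) ^ ((1 : ℝ) / (κ : ℝ)) := by linarith
        _ ≤ 1 + (κ : ℝ) * b := by linarith
        _ = (κ : ℝ) * σ := by rw [hκb]; ring

end AP

/-- Awerbuch–Peleg sparse covers (existence version). Given a cover `𝒞` of a finite
graph `G` by clusters (connected vertex subsets) and an integer `κ ≥ 1`, there is a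
cover `𝒞′` such that (i) every cluster of `𝒞` is contained in some cluster of `𝒞′`,
(ii) the strong diameter of every cluster of `𝒞′` is at most `4κ` times the maximum
strong diameter of clusters of `𝒞`, and (iii) every vertex belongs to at most
`2κ·|𝒞|^{1/κ}` clusters of `𝒞′`. -/
theorem sparse_cover_exists {V : Type*} [Fintype V] [DecidableEq V]
    (G : SimpleGraph V) (𝒞 : Finset (Finset V)) (κ : ℕ) (hκ : 1 ≤ κ)
    (hcover : ∀ v : V, ∃ B ∈ 𝒞, v ∈ B)
    (hconn : ∀ B ∈ 𝒞, (G.induce (B : Set V)).Connected) :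
    ∃ 𝒞' : Finset (Finset V),
      (∀ v : V, ∃ B ∈ 𝒞', v ∈ B) ∧
      (∀ B ∈ 𝒞', (G.induce (B : Set V)).Connected) ∧
      (∀ B ∈ 𝒞, ∃ B' ∈ 𝒞', B ⊆ B') ∧
      (∀ D : ℕ,
        (∀ B ∈ 𝒞, ∀ u v : V, ∀ (hu : u ∈ B) (hv : v ∈ B),
          (G.induce (B : Set V)).dist ⟨u, Finset.mem_coe.mpr hu⟩ ⟨v, Finset.mem_coe.mpr hv⟩ ≤ D) →
        ∀ B' ∈ 𝒞', ∀ u v : V, ∀ (hu : u ∈ B') (hv : v ∈ B'),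
          (G.induce (B' : Set V)).dist ⟨u, Finset.mem_coe.mpr hu⟩ ⟨v, Finset.mem_coe.mpr hv⟩
            ≤ 4 * κ * D) ∧
      (∀ v : V, (((𝒞'.filter (fun B => v ∈ B)).card : ℝ)) ≤
        2 * (κ : ℝ) * (𝒞.card : ℝ) ^ ((1 : ℝ) / (κ : ℝ))) := by
  obtain ⟨𝒞', hprops, hcov', hload⟩ :=
    ap_cover G 𝒞 hconn κ hκ 𝒞.card 𝒞 rfl (fun B hB => hB)
  refine ⟨𝒞', ?_, ?_, hcov', ?_, ?_⟩
  · intro v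
    obtain ⟨B, hB, hvB⟩ := hcover v
    obtain ⟨Y, hY, hBY⟩ := hcov' B hB
    exact ⟨Y, hY, hBY hvB⟩
  · intro B hB
    exact (hprops B hB).1
  · intro D hD B' hB' u v hu hv
    have h := (hprops B' hB').2 D hD u v hu hv
    have h2 : (2 * κ + 1) * D ≤ 4 * κ * D := Nat.mul_le_mul_right D (by omega)
    exact le_trans h h2
  · intro v
    have h := hload v
    have hnn : (0 : ℝ) ≤ (𝒞.card : ℝ) ^ ((1 : ℝ) / (κ : ℝ)) :=
      Real.rpow_nonneg (by positivity) _
    have hκ1 : (1 : ℝ) ≤ (κ : ℝ) := by exact_mod_cast hκ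
    nlinarith [h, hnn, hκ1]
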